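/- Let n ≥ 2 and let T be a totally symmetric 3-tensor on ℝⁿ (i.e. T_{ijk} is invariant under all permutations of its indices). Define its trace vector by (tr T)_i = Σ_j T_{ijj}. Then |T|² ≥ (3/(n+2)) |tr T|², where |T|² = Σ_{i,j,k} T_{ijk}² and |tr T|² = Σ_i (tr T)_i². -/
import Mathlib

open Finset in
/-- Kato-type inequality for totally symmetric 3-tensors on `ℝⁿ`:
`|T|² ≥ (3/(n+2)) |tr T|²`. -/
theorem stmt4 (n : ℕ) (hn : 2 ≤ n) (T : Fin n → Fin n → Fin n → ℝ)
    (hsym : ∀ i j k, T i j k = T j i k ∧ T i j k = T i k j) :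
    (∑ i, ∑ j, ∑ k, (T i j k) ^ 2)
      ≥ (3 / ((n : ℝ) + 2)) * ∑ i, (∑ j, T i j j) ^ 2 := by
  set v : Fin n → ℝ := fun i => ∑ j, T i j j with hv
  set g : Fin n → Fin n → Fin n → ℝ := fun i j k =>
    (if i = j then v k else 0) + (if j = k then v i else 0) + (if i = k then v j else 0) with hg
  set A : ℝ := ∑ i, ∑ j, ∑ k, (T i j k) ^ 2 with hA
  set B : ℝ := ∑ i, v i ^ 2 with hB
  have htrace : ∀ k, (∑ i, T i i k) = v k := by
    intro k
    simp only [hv]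
    refine Finset.sum_congr rfl fun i _ => ?_
    rw [(hsym i i k).2, (hsym i k i).1]
  -- first Cauchy–Schwarz ingredient
  have h1 : (∑ i, ∑ j, ∑ k, T i j k * g i j k) = 3 * B := by
    have expand : ∀ i j k : Fin n, T i j k * g i j k =
        (if i = j then T i j k * v k else 0) + (if j = k then T i j k * v i else 0)
          + (if i = k then T i j k * v j else 0) := by
      intro i j k; simp only [hg]; split_ifs <;> ring
    simp only [expand, Finset.sum_add_distrib]
    have e1 : (∑ i, ∑ j, ∑ k, if i = j then T i j k * v k else 0) = B := by
      have : ∀ i : Fin n, (∑ j, ∑ k, if i = j then T i j k * v k else 0)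
          = ∑ k, T i i k * v k := by
        intro i
        rw [Finset.sum_comm]
        simp [Finset.sum_ite_eq]
      simp only [this]
      rw [Finset.sum_comm]
      simp only [← Finset.sum_mul, htrace, hB, sq]
    have e2 : (∑ i, ∑ j, ∑ k, if j = k then T i j k * v i else 0) = B := by
      simp only [Finset.sum_ite_eq, Finset.mem_univ, if_true]
      simp only [← Finset.sum_mul]
      simp only [hB, sq, hv]
    have e3 : (∑ i, ∑ j, ∑ k, if i = k then T i j k * v j else 0) = B := by
      simp only [Finset.sum_ite_eq, Finset.mem_univ, if_true]
      rw [Finset.sum_comm]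
      have hj : ∀ j : Fin n, (∑ i, T i j i * v j) = v j * v j := by
        intro j
        rw [← Finset.sum_mul]
        congr 1
        have : (∑ i, T i j i) = ∑ i, T j i i :=
          Finset.sum_congr rfl fun i _ => (hsym i j i).1
        rw [this, hv]
      simp only [hj, hB, sq]
    rw [e1, e2, e3]; ring
  have h2 : (∑ i, ∑ j, ∑ k, g i j k ^ 2) = (3 * n + 6) * B := by
    have expand : ∀ i j k : Fin n, g i j k ^ 2 =
        (if i = j then g i j k * v k else 0) + (if j = k then g i j k * v i else 0)
          + (if i = k then g i j k * v j else 0) := by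
      intro i j k; simp only [hg]; split_ifs <;> ring
    simp only [expand, Finset.sum_add_distrib]
    have sa : (∑ i, ∑ j, ∑ k, if i = j then g i j k * v k else 0) = ((n:ℝ) + 2) * B := by
      have step : ∀ i : Fin n, (∑ j, ∑ k, if i = j then g i j k * v k else 0)
          = B + 2 * v i ^ 2 := by
        intro i
        rw [Finset.sum_comm]
        simp only [Finset.sum_ite_eq, Finset.mem_univ, if_true]
        have e : ∀ k : Fin n, g i i k * v k
            = v k * v k + 2 * (if i = k then v i * v k else 0) := by
          intro k; simp only [hg]; simp only [if_true]; split_ifs with h <;> ring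
        simp only [e, Finset.sum_add_distrib, ← Finset.mul_sum, Finset.sum_ite_eq,
          Finset.mem_univ, if_true]
        simp [hB, sq]
      simp only [step, Finset.sum_add_distrib, Finset.sum_const, Finset.card_univ,
        Fintype.card_fin, nsmul_eq_mul, ← Finset.mul_sum, ← hB]
      ring
    have sb : (∑ i, ∑ j, ∑ k, if j = k then g i j k * v i else 0) = ((n:ℝ) + 2) * B := by
      have step : ∀ i : Fin n, (∑ j, ∑ k, if j = k then g i j k * v i else 0)
          = (n : ℝ) * v i ^ 2 + 2 * v i ^ 2 := by
        intro i
        simp only [Finset.sum_ite_eq, Finset.mem_univ, if_true]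
        have e : ∀ j : Fin n, g i j j * v i
            = v i * v i + 2 * (if i = j then v j * v i else 0) := by
          intro j; simp only [hg]; simp only [if_true]; split_ifs with h <;> ring
        simp only [e, Finset.sum_add_distrib, ← Finset.mul_sum, Finset.sum_ite_eq,
          Finset.mem_univ, if_true, Finset.sum_const, Finset.card_univ, Fintype.card_fin,
          nsmul_eq_mul]
        ring
      simp only [step, Finset.sum_add_distrib, ← Finset.mul_sum, ← hB]
      ring
    have sc : (∑ i, ∑ j, ∑ k, if i = k then g i j k * v j else 0) = ((n:ℝ) + 2) * B := by
      have step : ∀ i : Fin n, (∑ j, ∑ k, if i = k then g i j k * v j else 0)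
          = B + 2 * v i ^ 2 := by
        intro i
        simp only [Finset.sum_ite_eq, Finset.mem_univ, if_true]
        have e : ∀ j : Fin n, g i j i * v j
            = v j * v j + (if i = j then v i * v j else 0) + (if j = i then v i * v j else 0) := by
          intro j; simp only [hg]; split_ifs <;> ring
        simp only [e, Finset.sum_add_distrib, Finset.sum_ite_eq, Finset.sum_ite_eq',
          Finset.mem_univ, if_true]
        simp [hB, sq]; ring
      simp only [step, Finset.sum_add_distrib, Finset.sum_const, Finset.card_univ,
        Fintype.card_fin, nsmul_eq_mul, ← Finset.mul_sum, ← hB]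
      ring
    rw [sa, sb, sc]
    ring
  have hcs := Finset.sum_mul_sq_le_sq_mul_sq Finset.univ
    (fun p : Fin n × Fin n × Fin n => T p.1 p.2.1 p.2.2)
    (fun p : Fin n × Fin n × Fin n => g p.1 p.2.1 p.2.2)
  simp only [Fintype.sum_prod_type] at hcs
  rw [h1, h2, ← hA] at hcs
  have hBnn : 0 ≤ B := Finset.sum_nonneg fun i _ => sq_nonneg _
  have hAnn : 0 ≤ A := by
    refine Finset.sum_nonneg fun i _ => Finset.sum_nonneg fun j _ =>
      Finset.sum_nonneg fun k _ => sq_nonneg _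
  have hn2 : (0:ℝ) < (n:ℝ) + 2 := by positivity
  rw [ge_iff_le, div_mul_eq_mul_div, div_le_iff₀ hn2]
  rcases eq_or_lt_of_le hBnn with h | h
  · nlinarith
  · nlinarith [mul_pos hn2 h]
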